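/- Let (g₈, J_A) have (1,0)-basis ω¹,ω²,ω³ with dω¹ = −(A−i)ω¹∧ω³ − (A+i)ω¹∧ω̄³ + B ω³∧ω̄³, dω² = (A−i)ω²∧ω³ + (A+i)ω²∧ω̄³ + C ω³∧ω̄³, dω³ = 0 (Im A ≠ 0), and F a generic Hermitian form as above, with r²s² > |u|². Then ∂(F∧F) = 0 (F is balanced) if and only if B = −((i s² z̄ + ū v̄)/(r²s² − |u|²))(A+i) and C = ((i r² v̄ − u z̄)/(r²s² − |u|²))(A+i). Consequently: if B = C = 0 and A ≠ −i, then F is balanced iff v = z = 0; if B = C = 0 and A = −i, every Hermitian F is balanced; and if A = −i but (B,C) ≠ (0,0), no Hermitian F is balanced. -/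

import Mathlib

noncomputable section

/-- The space of invariant complex forms: the exterior algebra over the span of
`ω¹, ω², ω³, ω̄¹, ω̄², ω̄³` (indexed `0,…,5`). -/
abbrev Lambda : Type := ExteriorAlgebra ℂ (Fin 6 → ℂ)

/-- The generators `ω¹, ω², ω³, ω̄¹, ω̄², ω̄³` as degree-one elements. -/
def w (i : Fin 6) : Lambda := ExteriorAlgebra.ι ℂ (Pi.single i 1)

/-- Antiderivation property (Leibniz rule against `1`-forms): the defining extension
property of (the bigraded pieces of) the Chevalley–Eilenberg differential. -/
def IsAntideriv (D : Lambda →ₗ[ℂ] Lambda) : Prop :=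
  D 1 = 0 ∧ ∀ (v : Fin 6 → ℂ) (x : Lambda),
    D (ExteriorAlgebra.ι ℂ v * x) =
      D (ExteriorAlgebra.ι ℂ v) * x - ExteriorAlgebra.ι ℂ v * D x

/-- The generic Hermitian form
`2F = i(r²ω¹∧ω̄¹ + s²ω²∧ω̄² + t²ω³∧ω̄³) + uω¹∧ω̄² − ūω²∧ω̄¹ + vω²∧ω̄³ − v̄ω³∧ω̄²
  + zω¹∧ω̄³ − z̄ω³∧ω̄¹`. -/
def Fherm (r s t : ℝ) (u v z : ℂ) : Lambda :=
  (1 / 2 : ℂ) •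
    (Complex.I • ((r : ℂ) ^ 2 • (w 0 * w 3) + (s : ℂ) ^ 2 • (w 1 * w 4) +
        (t : ℂ) ^ 2 • (w 2 * w 5)) +
      u • (w 0 * w 4) - (starRingEnd ℂ) u • (w 1 * w 3) +
      v • (w 1 * w 5) - (starRingEnd ℂ) v • (w 2 * w 4) +
      z • (w 0 * w 5) - (starRingEnd ℂ) z • (w 2 * w 3))

/-- Positivity constraints making `Fherm r s t u v z` a Hermitian metric. -/
def HermPos (r s t : ℝ) (u v z : ℂ) : Prop :=
  r ≠ 0 ∧ s ≠ 0 ∧ t ≠ 0 ∧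
  r ^ 2 * s ^ 2 > Complex.normSq u ∧ s ^ 2 * t ^ 2 > Complex.normSq v ∧
  r ^ 2 * t ^ 2 > Complex.normSq z ∧
  r ^ 2 * s ^ 2 * t ^ 2 +
      2 * (Complex.I * (starRingEnd ℂ) u * (starRingEnd ℂ) v * z).re >
    t ^ 2 * Complex.normSq u + r ^ 2 * Complex.normSq v + s ^ 2 * Complex.normSq z

open ComplexConjugate

/- ### Auxiliary lemmas -/

lemma w_sq (i : Fin 6) : w i * w i = 0 := ExteriorAlgebra.ι_sq_zero _

lemma w_swap (i j : Fin 6) (_h : j < i) : w i * w j = -(w j * w i) :=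
  eq_neg_of_add_eq_zero_left (ExteriorAlgebra.ι_add_mul_swap _ _)

lemma w_sq' (i : Fin 6) (x : Lambda) : w i * (w i * x) = 0 := by
  rw [← mul_assoc, w_sq, zero_mul]

lemma w_swap' (i j : Fin 6) (_h : j < i) (x : Lambda) :
    w i * (w j * x) = -(w j * (w i * x)) := by
  rw [← mul_assoc, w_swap i j _h, neg_mul, mul_assoc]

set_option maxHeartbeats 2000000 in
lemma FF (r s t : ℝ) (u v z : ℂ) :
    Fherm r s t u v z * Fherm r s t u v z =
      ((1/2 : ℂ)*((r:ℂ)^2*(s:ℂ)^2) - (1/2)*(u*conj u)) • (w 0*(w 1*(w 3*w 4)))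
    + (-(1/2 : ℂ)*(conj u*z) - (Complex.I/2)*((r:ℂ)^2*v)) • (w 0*(w 1*(w 3*w 5)))
    + (-(1/2 : ℂ)*(u*v) + (Complex.I/2)*((s:ℂ)^2*z)) • (w 0*(w 1*(w 4*w 5)))
    + (-(1/2 : ℂ)*(u*conj z) + (Complex.I/2)*((r:ℂ)^2*conj v)) • (w 0*(w 2*(w 3*w 4)))
    + ((1/2 : ℂ)*((r:ℂ)^2*(t:ℂ)^2) - (1/2)*(z*conj z)) • (w 0*(w 2*(w 3*w 5)))
    + (-(1/2 : ℂ)*(conj v*z) - (Complex.I/2)*((t:ℂ)^2*u)) • (w 0*(w 2*(w 4*w 5)))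
    + (-(1/2 : ℂ)*(conj u*conj v) - (Complex.I/2)*((s:ℂ)^2*conj z)) • (w 1*(w 2*(w 3*w 4)))
    + (-(1/2 : ℂ)*(v*conj z) + (Complex.I/2)*((t:ℂ)^2*conj u)) • (w 1*(w 2*(w 3*w 5)))
    + ((1/2 : ℂ)*((s:ℂ)^2*(t:ℂ)^2) - (1/2)*(v*conj v)) • (w 1*(w 2*(w 4*w 5))) := by
  rw [Fherm]
  simp +decide only [smul_add, smul_sub, smul_smul, add_mul, sub_mul, mul_add, mul_sub,
    smul_mul_assoc, mul_smul_comm, mul_assoc, w_sq, w_sq', w_swap, w_swap',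
    mul_neg, neg_mul, smul_neg, neg_neg, mul_zero, zero_mul, smul_zero,
    add_zero, zero_add, neg_zero, sub_zero, zero_sub, sub_neg_eq_add]
  match_scalars <;> (first | ring1 | (ring_nf; simp only [Complex.I_sq]; ring1))

set_option maxHeartbeats 4000000 in
lemma key (A B C : ℂ) (Dp : Lambda →ₗ[ℂ] Lambda) (hDp : IsAntideriv Dp)
    (hp0 : Dp (w 0) = (-(A - Complex.I)) • (w 0 * w 2))
    (hp1 : Dp (w 1) = (A - Complex.I) • (w 1 * w 2))
    (hp2 : Dp (w 2) = 0)
    (hp3 : Dp (w 3) = (-((starRingEnd ℂ) A - Complex.I)) • (w 3 * w 2) +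
      (starRingEnd ℂ) B • (w 5 * w 2))
    (hp4 : Dp (w 4) = ((starRingEnd ℂ) A - Complex.I) • (w 4 * w 2) +
      (starRingEnd ℂ) C • (w 5 * w 2))
    (hp5 : Dp (w 5) = 0)
    (r s t : ℝ) (u v z : ℂ) :
    Dp (Fherm r s t u v z * Fherm r s t u v z) =
      ((Complex.I/2)*(conj u*z) - (1/2)*((r:ℂ)^2*v) + (1/2)*(conj C*(u*conj u))
        - (1/2)*(conj C*((r:ℂ)^2*(s:ℂ)^2)) - (1/2)*(conj A*(conj u*z))
        - (Complex.I/2)*(conj A*((r:ℂ)^2*v))) • (w 0*(w 1*(w 2*(w 3*w 5))))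
    + (-(Complex.I/2)*(u*v) - (1/2)*((s:ℂ)^2*z) - (1/2)*(conj B*(u*conj u))
        + (1/2)*(conj B*((r:ℂ)^2*(s:ℂ)^2)) + (1/2)*(conj A*(u*v))
        - (Complex.I/2)*(conj A*((s:ℂ)^2*z))) • (w 0*(w 1*(w 2*(w 4*w 5)))) := by
  have hw : ∀ (i : Fin 6) (x : Lambda), Dp (w i * x) = Dp (w i) * x - w i * Dp x :=
    fun i x => hDp.2 (Pi.single i 1) x
  rw [FF]
  simp +decide only [map_add, map_smul, hw, hp0, hp1, hp2, hp3, hp4, hp5,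
    smul_add, smul_sub, smul_smul, add_mul, sub_mul, mul_add, mul_sub,
    smul_mul_assoc, mul_smul_comm, mul_assoc, w_sq, w_sq', w_swap, w_swap',
    mul_neg, neg_mul, smul_neg, neg_neg, mul_zero, zero_mul, smul_zero,
    add_zero, zero_add, neg_zero, sub_zero, zero_sub, sub_neg_eq_add]
  match_scalars <;> (first | ring1 | (ring_nf; simp only [Complex.I_sq]; ring1))

def gdet (c : Fin 5 → Fin 6) : (Fin 6 → ℂ) [⋀^Fin 5]→ₗ[ℂ] ℂ :=
  Matrix.detRowAlternating.compLinearMap (LinearMap.funLeft ℂ ℂ c)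

def fam (c : Fin 5 → Fin 6) : ∀ n, (Fin 6 → ℂ) [⋀^Fin n]→ₗ[ℂ] ℂ :=
  fun n => match n with
  | 5 => gdet c
  | _ => 0

def phi (c : Fin 5 → Fin 6) : Lambda →ₗ[ℂ] ℂ := ExteriorAlgebra.liftAlternating (fam c)

set_option maxRecDepth 10000 in
lemma phi_mono (c : Fin 5 → Fin 6) (a0 a1 a2 a3 a4 : Fin 6) :
    phi c (w a0 * (w a1 * (w a2 * (w a3 * w a4)))) =
      Matrix.det (Matrix.of fun i j =>
        (Pi.single ((![a0,a1,a2,a3,a4]) i) 1 : Fin 6 → ℂ) (c j)) := by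
  have h : w a0 * (w a1 * (w a2 * (w a3 * w a4))) =
      ExteriorAlgebra.ιMulti ℂ 5 (fun i => Pi.single ((![a0,a1,a2,a3,a4]) i) 1) := by
    rw [ExteriorAlgebra.ιMulti_apply]
    simp only [List.ofFn_succ, List.ofFn_zero, List.prod_cons, List.prod_nil,
      mul_one, mul_assoc, w]
    rfl
  rw [h, phi, ExteriorAlgebra.liftAlternating_apply_ιMulti]
  simp only [fam, gdet, AlternatingMap.compLinearMap_apply]
  exact congrArg Matrix.det (by ext i j; rfl)

lemma phiA1 : phi ![0,1,2,3,5] (w 0*(w 1*(w 2*(w 3*w 5)))) = 1 := by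
  rw [phi_mono]
  have h : (Matrix.of fun i j =>
      (Pi.single ((![0,1,2,3,5] : Fin 5 → Fin 6) i) 1 : Fin 6 → ℂ)
        ((![0,1,2,3,5] : Fin 5 → Fin 6) j)) = 1 := by
    ext i j
    fin_cases i <;> fin_cases j <;> simp [Pi.single_apply, Matrix.one_apply]
  rw [h, Matrix.det_one]

lemma phiA2 : phi ![0,1,2,3,5] (w 0*(w 1*(w 2*(w 4*w 5)))) = 0 := by
  rw [phi_mono]
  apply Matrix.det_eq_zero_of_row_eq_zero 3
  intro j
  fin_cases j <;> simp [Pi.single_apply]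

lemma phiB1 : phi ![0,1,2,4,5] (w 0*(w 1*(w 2*(w 3*w 5)))) = 0 := by
  rw [phi_mono]
  apply Matrix.det_eq_zero_of_row_eq_zero 3
  intro j
  fin_cases j <;> simp [Pi.single_apply]

lemma phiB2 : phi ![0,1,2,4,5] (w 0*(w 1*(w 2*(w 4*w 5)))) = 1 := by
  rw [phi_mono]
  have h : (Matrix.of fun i j =>
      (Pi.single ((![0,1,2,4,5] : Fin 5 → Fin 6) i) 1 : Fin 6 → ℂ)
        ((![0,1,2,4,5] : Fin 5 → Fin 6) j)) = 1 := by
    ext i j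
    fin_cases i <;> fin_cases j <;> simp [Pi.single_apply, Matrix.one_apply]
  rw [h, Matrix.det_one]

lemma scalar2 (A B u v z : ℂ) (r s : ℝ)
    (hDu : ((r:ℂ)^2*(s:ℂ)^2 - u*conj u) ≠ 0) :
    conj (-(Complex.I/2)*(u*v) - (1/2 : ℂ)*((s:ℂ)^2*z) - (1/2)*(conj B*(u*conj u))
        + (1/2)*(conj B*((r:ℂ)^2*(s:ℂ)^2)) + (1/2)*(conj A*(u*v))
        - (Complex.I/2)*(conj A*((s:ℂ)^2*z)))
      = (((r:ℂ)^2*(s:ℂ)^2 - u*conj u)/2) *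
        (B - (-((Complex.I*(s:ℂ)^2*conj z + conj u*conj v) /
            ((r:ℂ)^2*(s:ℂ)^2 - u*conj u))*(A+Complex.I))) := by
  simp only [map_add, map_sub, map_mul, map_neg, map_div₀, map_pow, map_one, map_ofNat,
    Complex.conj_conj, Complex.conj_I, Complex.conj_ofReal]
  field_simp
  have hDu' : (s:ℂ)^2*(r:ℂ)^2 - conj u*u ≠ 0 := fun h => hDu (by linear_combination h)
  field_simp
  first | ring1 | (ring_nf; simp only [Complex.I_sq]; ring1)

lemma scalar1 (A C u v z : ℂ) (r s : ℝ)
    (hDu : ((r:ℂ)^2*(s:ℂ)^2 - u*conj u) ≠ 0) :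
    conj ((Complex.I/2)*(conj u*z) - (1/2 : ℂ)*((r:ℂ)^2*v) + (1/2)*(conj C*(u*conj u))
        - (1/2)*(conj C*((r:ℂ)^2*(s:ℂ)^2)) - (1/2)*(conj A*(conj u*z))
        - (Complex.I/2)*(conj A*((r:ℂ)^2*v)))
      = (-(((r:ℂ)^2*(s:ℂ)^2 - u*conj u)/2)) *
        (C - (((Complex.I*(r:ℂ)^2*conj v - u*conj z) /
            ((r:ℂ)^2*(s:ℂ)^2 - u*conj u))*(A+Complex.I))) := by
  simp only [map_add, map_sub, map_mul, map_neg, map_div₀, map_pow, map_one, map_ofNat,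
    Complex.conj_conj, Complex.conj_I, Complex.conj_ofReal]
  field_simp
  first | ring1 | (ring_nf; simp only [Complex.I_sq]; ring1)

theorem stmt13 (A B C : ℂ) (hA : A.im ≠ 0)
    (Dp Db : Lambda →ₗ[ℂ] Lambda) (hDp : IsAntideriv Dp) (hDb : IsAntideriv Db)
    (hp0 : Dp (w 0) = (-(A - Complex.I)) • (w 0 * w 2))
    (hp1 : Dp (w 1) = (A - Complex.I) • (w 1 * w 2))
    (hp2 : Dp (w 2) = 0)
    (hp3 : Dp (w 3) = (-((starRingEnd ℂ) A - Complex.I)) • (w 3 * w 2) +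
      (starRingEnd ℂ) B • (w 5 * w 2))
    (hp4 : Dp (w 4) = ((starRingEnd ℂ) A - Complex.I) • (w 4 * w 2) +
      (starRingEnd ℂ) C • (w 5 * w 2))
    (hp5 : Dp (w 5) = 0)
    (hb0 : Db (w 0) = (-(A + Complex.I)) • (w 0 * w 5) + B • (w 2 * w 5))
    (hb1 : Db (w 1) = (A + Complex.I) • (w 1 * w 5) + C • (w 2 * w 5))
    (hb2 : Db (w 2) = 0)
    (hb3 : Db (w 3) = (-((starRingEnd ℂ) A + Complex.I)) • (w 3 * w 5))
    (hb4 : Db (w 4) = ((starRingEnd ℂ) A + Complex.I) • (w 4 * w 5))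
    (hb5 : Db (w 5) = 0)
    (r s t : ℝ) (u v z : ℂ) (hF : HermPos r s t u v z) :
    (Dp (Fherm r s t u v z * Fherm r s t u v z) = 0 ↔
      (B = -((Complex.I * (s : ℂ) ^ 2 * (starRingEnd ℂ) z +
          (starRingEnd ℂ) u * (starRingEnd ℂ) v) /
          ((r : ℂ) ^ 2 * (s : ℂ) ^ 2 - (Complex.normSq u : ℂ))) * (A + Complex.I) ∧
       C = ((Complex.I * (r : ℂ) ^ 2 * (starRingEnd ℂ) v - u * (starRingEnd ℂ) z) /
          ((r : ℂ) ^ 2 * (s : ℂ) ^ 2 - (Complex.normSq u : ℂ))) * (A + Complex.I))) ∧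
    (B = 0 → C = 0 → A ≠ -Complex.I →
      (Dp (Fherm r s t u v z * Fherm r s t u v z) = 0 ↔ v = 0 ∧ z = 0)) ∧
    (B = 0 → C = 0 → A = -Complex.I →
      Dp (Fherm r s t u v z * Fherm r s t u v z) = 0) ∧
    (A = -Complex.I → ¬(B = 0 ∧ C = 0) →
      Dp (Fherm r s t u v z * Fherm r s t u v z) ≠ 0) := by
  obtain ⟨hr, hs, ht, hu, -, -, -⟩ := hF
  -- the denominator is nonzero
  have hDr : (0:ℝ) < r^2*s^2 - Complex.normSq u := sub_pos.2 hu
  have hD : ((r:ℂ)^2*(s:ℂ)^2 - (Complex.normSq u : ℂ)) ≠ 0 := by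
    have h1 : (((r^2*s^2 - Complex.normSq u : ℝ)) : ℂ) ≠ 0 := by
      exact_mod_cast ne_of_gt hDr
    push_cast at h1
    exact h1
  have huc : ((Complex.normSq u : ℂ)) = u * conj u := (Complex.mul_conj u).symm
  have hDu : ((r:ℂ)^2*(s:ℂ)^2 - u*conj u) ≠ 0 := by rw [← huc]; exact hD
  set c1 : ℂ := (Complex.I/2)*(conj u*z) - (1/2)*((r:ℂ)^2*v) + (1/2)*(conj C*(u*conj u))
        - (1/2)*(conj C*((r:ℂ)^2*(s:ℂ)^2)) - (1/2)*(conj A*(conj u*z))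
        - (Complex.I/2)*(conj A*((r:ℂ)^2*v)) with hc1def
  set c2 : ℂ := -(Complex.I/2)*(u*v) - (1/2)*((s:ℂ)^2*z) - (1/2)*(conj B*(u*conj u))
        + (1/2)*(conj B*((r:ℂ)^2*(s:ℂ)^2)) + (1/2)*(conj A*(u*v))
        - (Complex.I/2)*(conj A*((s:ℂ)^2*z)) with hc2def
  have hkey := key A B C Dp hDp hp0 hp1 hp2 hp3 hp4 hp5 r s t u v z
  rw [← hc1def, ← hc2def] at hkey
  -- vanishing iff both coefficients vanish
  have hvan : Dp (Fherm r s t u v z * Fherm r s t u v z) = 0 ↔ c1 = 0 ∧ c2 = 0 := by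
    rw [hkey]
    constructor
    · intro h
      have h1 := congrArg (phi ![0,1,2,3,5]) h
      have h2 := congrArg (phi ![0,1,2,4,5]) h
      simp only [map_add, map_smul, map_zero, phiA1, phiA2, phiB1, phiB2,
        smul_eq_mul, mul_one, mul_zero, add_zero, zero_add] at h1 h2
      exact ⟨h1, h2⟩
    · rintro ⟨h1, h2⟩
      rw [h1, h2, zero_smul, zero_smul, add_zero]
  -- scalar characterizations
  have hc2iff : c2 = 0 ↔ B = -((Complex.I*(s:ℂ)^2*conj z + conj u*conj v) /
      ((r:ℂ)^2*(s:ℂ)^2 - u*conj u))*(A+Complex.I) := by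
    rw [← map_eq_zero_iff (starRingEnd ℂ) (RingHom.injective _), hc2def,
      scalar2 A B u v z r s hDu, mul_eq_zero, sub_eq_zero]
    have hhalf : ((r:ℂ)^2*(s:ℂ)^2 - u*conj u)/2 ≠ 0 := by
      exact div_ne_zero hDu two_ne_zero
    simp [hhalf]
  have hc1iff : c1 = 0 ↔ C = ((Complex.I*(r:ℂ)^2*conj v - u*conj z) /
      ((r:ℂ)^2*(s:ℂ)^2 - u*conj u))*(A+Complex.I) := by
    rw [← map_eq_zero_iff (starRingEnd ℂ) (RingHom.injective _), hc1def,
      scalar1 A C u v z r s hDu, mul_eq_zero, sub_eq_zero]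
    have hhalf : -(((r:ℂ)^2*(s:ℂ)^2 - u*conj u)/2) ≠ 0 := by
      simpa using div_ne_zero hDu (two_ne_zero (α := ℂ))
    simp [hhalf]
  -- the main equivalence
  have main₁ : Dp (Fherm r s t u v z * Fherm r s t u v z) = 0 ↔
      (B = -((Complex.I * (s : ℂ) ^ 2 * (starRingEnd ℂ) z +
          (starRingEnd ℂ) u * (starRingEnd ℂ) v) /
          ((r : ℂ) ^ 2 * (s : ℂ) ^ 2 - (Complex.normSq u : ℂ))) * (A + Complex.I) ∧
       C = ((Complex.I * (r : ℂ) ^ 2 * (starRingEnd ℂ) v - u * (starRingEnd ℂ) z) /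
          ((r : ℂ) ^ 2 * (s : ℂ) ^ 2 - (Complex.normSq u : ℂ))) * (A + Complex.I)) := by
    rw [hvan, hc1iff, hc2iff, huc, and_comm]
  refine ⟨main₁, ?_, ?_, ?_⟩
  · -- B = C = 0, A ≠ -i
    intro hB hC hAi
    have hAI : A + Complex.I ≠ 0 := fun h => hAi (by linear_combination h)
    rw [main₁]
    constructor
    · rintro ⟨h1, h2⟩
      rw [hB] at h1; rw [hC] at h2
      have hX : Complex.I*(s:ℂ)^2*conj z + conj u*conj v = 0 := by
        have h1' := h1.symm
        rw [neg_mul, neg_eq_zero, div_mul_eq_mul_div, div_eq_zero_iff] at h1'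
        rcases h1' with h1' | h1'
        · exact (mul_eq_zero.1 h1').resolve_right hAI
        · exact absurd h1' hD
      have hY : Complex.I*(r:ℂ)^2*conj v - u*conj z = 0 := by
        have h2' := h2.symm
        rw [div_mul_eq_mul_div, div_eq_zero_iff] at h2'
        rcases h2' with h2' | h2'
        · exact (mul_eq_zero.1 h2').resolve_right hAI
        · exact absurd h2' hD
      have hvz : ((r:ℂ)^2*(s:ℂ)^2 - u*conj u) * (conj v * conj z) = 0 := by
        linear_combination (-Complex.I*(r:ℂ)^2*conj v) * hX + (conj u * conj v) * hY +
          ((r:ℂ)^2*(s:ℂ)^2*conj v*conj z) * Complex.I_sq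
      have hvz' : conj v * conj z = 0 := (mul_eq_zero.1 hvz).resolve_left hDu
      have hs2 : ((s:ℂ))^2 ≠ 0 := pow_ne_zero _ (Complex.ofReal_ne_zero.2 hs)
      have hr2 : ((r:ℂ))^2 ≠ 0 := pow_ne_zero _ (Complex.ofReal_ne_zero.2 hr)
      rcases mul_eq_zero.1 hvz' with hv0 | hz0
      · have hv : v = 0 := by
          have := congrArg conj hv0; simpa using this
        have hz : z = 0 := by
          rw [hv0, mul_zero, add_zero, mul_eq_zero, mul_eq_zero] at hX
          rcases hX with (hX | hX) | hX
          · exact absurd hX Complex.I_ne_zero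
          · exact absurd hX hs2
          · have := congrArg conj hX; simpa using this
        exact ⟨hv, hz⟩
      · have hz : z = 0 := by
          have := congrArg conj hz0; simpa using this
        have hv : v = 0 := by
          rw [hz0, mul_zero, sub_zero, mul_eq_zero, mul_eq_zero] at hY
          rcases hY with (hY | hY) | hY
          · exact absurd hY Complex.I_ne_zero
          · exact absurd hY hr2
          · have := congrArg conj hY; simpa using this
        exact ⟨hv, hz⟩
    · rintro ⟨rfl, rfl⟩
      rw [hB, hC]
      constructor <;> simp
  · -- B = C = 0, A = -i
    intro hB hC hAe
    rw [main₁, hB, hC, hAe]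
    constructor <;> simp
  · -- A = -i, (B,C) ≠ (0,0)
    intro hAe hBC h0
    apply hBC
    rw [main₁] at h0
    obtain ⟨hB', hC'⟩ := h0
    rw [hAe] at hB' hC'
    simp at hB' hC'
    exact ⟨hB', hC'⟩

end
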